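/- (Dimension reduction for decoupling, Fubini–Minkowski form.) Let $p\ge q\ge 1$. Let $Q_1:\mathbb{R}^{d_0}\to\mathbb{R}^{d_1}$ and $Q_2:\mathbb{R}^{d_0}\to\mathbb{R}^{d_2}$ be measurable, and let $E^{(1)},E^{(2)}$ be the extension operators $E^{(1)}_Ug(x_0,x_1)=\int_U g(u)e(x_0\cdot u+x_1\cdot Q_1(u))du$ and $E^{(2)}_Uh(x_0,x_1,x_2)=\int_U h(u)e(x_0\cdot u+x_1\cdot Q_1(u)+x_2\cdot Q_2(u))du$. Fix a measurable partition $U_1,\ldots,U_l$ of $[0,1]^{d_0}$ and a measurable set $B\subset\mathbb{R}^{d_0+d_1}$. If $C$ is such that $\|E^{(1)}_{[0,1]^{d_0}}g\|_{L^p(B)}\le C\big(\sum_i\|E^{(1)}_{U_i}g\|_{L^p(B)}^q\big)^{1/q}$ for all integrable $g$, then for every measurable $B'\subset\mathbb{R}^{d_2}$ and every integrable $h$, $\|E^{(2)}_{[0,1]^{d_0}}h\|_{L^p(B\times B')}\le C\big(\sum_i\|E^{(2)}_{U_i}h\|_{L^p(B\times B')}^q\big)^{1/q}$. -/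

import Mathlib

open MeasureTheory
open scoped ENNReal

/-- `e(z) = e^{2πiz}`. -/
noncomputable def e₂ (z : ℝ) : ℂ := Complex.exp (2 * Real.pi * Complex.I * z)

/-- The unit cube `[0,1]^d`. -/
def unitCube (d : ℕ) : Set (Fin d → ℝ) := Set.univ.pi fun _ => Set.Icc (0 : ℝ) 1

lemma e₂_add (s t : ℝ) : e₂ (s + t) = e₂ s * e₂ t := by
  unfold e₂; rw [← Complex.exp_add]; congr 1; push_cast; ring

lemma e₂_norm (t : ℝ) : ‖e₂ t‖ = 1 := by
  unfold e₂
  have : 2 * (Real.pi : ℂ) * Complex.I * (t : ℝ) = ((2 * Real.pi * t : ℝ) : ℂ) * Complex.I := by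
    push_cast; ring
  rw [this, Complex.norm_exp_ofReal_mul_I]

lemma e₂_continuous : Continuous e₂ := by
  unfold e₂; fun_prop

lemma minkowski_finset {α ι : Type*} [MeasurableSpace α] {μ : Measure α}
    (s : Finset ι) (f : ι → α → ℝ≥0∞) (hf : ∀ i, AEMeasurable (f i) μ)
    {r : ℝ} (hr : 1 ≤ r) :
    (∫⁻ x, (∑ i ∈ s, f i x) ^ r ∂μ) ^ (1 / r) ≤
      ∑ i ∈ s, (∫⁻ x, f i x ^ r ∂μ) ^ (1 / r) := by
  classical
  induction s using Finset.cons_induction with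
  | empty =>
      simp [ENNReal.zero_rpow_of_pos (lt_of_lt_of_le zero_lt_one hr),
        ENNReal.zero_rpow_of_pos (by positivity : (0:ℝ) < 1 / r), lt_of_lt_of_le zero_lt_one hr]
  | cons a s ha ih =>
      simp only [Finset.sum_cons]
      have h1 : AEMeasurable (fun x => ∑ i ∈ s, f i x) μ :=
        Finset.aemeasurable_fun_sum s fun i _ => hf i
      calc (∫⁻ x, (f a x + ∑ i ∈ s, f i x) ^ r ∂μ) ^ (1 / r)
          ≤ (∫⁻ x, f a x ^ r ∂μ) ^ (1 / r)
            + (∫⁻ x, (∑ i ∈ s, f i x) ^ r ∂μ) ^ (1 / r) :=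
            ENNReal.lintegral_Lp_add_le (hf a) h1 hr
        _ ≤ _ := by exact add_le_add_right ih _

lemma fubini_eLpNorm {α γ : Type*} [MeasurableSpace α] [MeasurableSpace γ]
    {μ : Measure α} {ν : Measure γ} [SFinite μ] [SFinite ν]
    {p : ℝ} (hp : 0 < p) {F : α × γ → ℂ} (hF : StronglyMeasurable F) :
    eLpNorm F (ENNReal.ofReal p) (μ.prod ν)
      = (∫⁻ y, (eLpNorm (fun x => F (x, y)) (ENNReal.ofReal p) μ) ^ p ∂ν) ^ (1 / p) := by
  have h0 : ENNReal.ofReal p ≠ 0 := by simp [ENNReal.ofReal_eq_zero]; linarith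
  have htop : ENNReal.ofReal p ≠ ∞ := ENNReal.ofReal_ne_top
  have hmeas : AEMeasurable (fun z : α × γ => ‖F z‖ₑ ^ p) (μ.prod ν) :=
    (hF.measurable.enorm.pow_const p).aemeasurable
  rw [eLpNorm_eq_lintegral_rpow_enorm_toReal h0 htop, ENNReal.toReal_ofReal hp.le,
    MeasureTheory.lintegral_prod_symm _ hmeas]
  congr 1
  refine lintegral_congr fun y => ?_
  rw [eLpNorm_eq_lintegral_rpow_enorm_toReal h0 htop, ENNReal.toReal_ofReal hp.le,
    ← ENNReal.rpow_mul, one_div_mul_cancel hp.ne', ENNReal.rpow_one]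

lemma key12 {γ : Type*} [MeasurableSpace γ] {ν : Measure γ} {l : ℕ}
    {p q : ℝ} (hq : 1 ≤ q) (hpq : q ≤ p)
    (C : ℝ≥0∞) (f : γ → ℝ≥0∞) (g : Fin l → γ → ℝ≥0∞)
    (hg : ∀ i, AEMeasurable (g i) ν)
    (hpt : ∀ y, f y ≤ C * (∑ i, g i y ^ q) ^ (1 / q)) :
    (∫⁻ y, f y ^ p ∂ν) ^ (1 / p) ≤
      C * (∑ i, ((∫⁻ y, g i y ^ p ∂ν) ^ (1 / p)) ^ q) ^ (1 / q) := by
  have hq0 : (0:ℝ) < q := lt_of_lt_of_le zero_lt_one hq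
  have hp1 : (1:ℝ) ≤ p := le_trans hq hpq
  have hp0 : (0:ℝ) < p := lt_of_lt_of_le zero_lt_one hp1
  have hr1 : (1:ℝ) ≤ p / q := (one_le_div hq0).mpr hpq
  have hmeas : AEMeasurable (fun y => (∑ i, g i y ^ q) ^ (p / q)) ν :=
    (Finset.aemeasurable_fun_sum _ fun i _ => (hg i).pow_const q).pow_const _
  calc (∫⁻ y, f y ^ p ∂ν) ^ (1 / p)
      ≤ (∫⁻ y, (C * (∑ i, g i y ^ q) ^ (1 / q)) ^ p ∂ν) ^ (1 / p) :=
        ENNReal.rpow_le_rpow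
          (lintegral_mono fun y => ENNReal.rpow_le_rpow (hpt y) hp0.le) (by positivity)
    _ = (∫⁻ y, C ^ p * (∑ i, g i y ^ q) ^ (p / q) ∂ν) ^ (1 / p) := by
        congr 1
        refine lintegral_congr fun y => ?_
        rw [ENNReal.mul_rpow_of_nonneg _ _ hp0.le, ← ENNReal.rpow_mul, one_div,
          inv_mul_eq_div]
    _ = C * (∫⁻ y, (∑ i, g i y ^ q) ^ (p / q) ∂ν) ^ (1 / p) := by
        rw [lintegral_const_mul'' _ hmeas,
          ENNReal.mul_rpow_of_nonneg _ _ (by positivity : (0:ℝ) ≤ 1 / p),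
          ← ENNReal.rpow_mul, mul_one_div_cancel hp0.ne', ENNReal.rpow_one]
    _ ≤ C * (∑ i, (∫⁻ y, (g i y ^ q) ^ (p / q) ∂ν) ^ (1 / (p / q))) ^ (1 / q) := by
        refine mul_le_mul_right ?_ C
        have hmink := minkowski_finset Finset.univ (fun i y => g i y ^ q)
          (fun i => (hg i).pow_const q) hr1
        have harith : (1:ℝ) / p = (1 / (p / q)) * (1 / q) := by
          field_simp
        rw [harith, ENNReal.rpow_mul]
        exact ENNReal.rpow_le_rpow hmink (by positivity)
    _ = C * (∑ i, ((∫⁻ y, g i y ^ p ∂ν) ^ (1 / p)) ^ q) ^ (1 / q) := by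
        congr 2
        refine Finset.sum_congr rfl fun i _ => ?_
        have h1 : ∀ y : γ, (g i y ^ q) ^ (p / q) = g i y ^ p := fun y => by
          rw [← ENNReal.rpow_mul]
          congr 1
          field_simp
        have h2 : (1:ℝ) / (p / q) = (1 / p) * q := by field_simp
        simp_rw [h1, h2, ENNReal.rpow_mul]

theorem stmt12 {d₀ d₁ d₂ : ℕ} (p q : ℝ) (hq : 1 ≤ q) (hpq : q ≤ p)
    (Q₁ : (Fin d₀ → ℝ) → (Fin d₁ → ℝ)) (Q₂ : (Fin d₀ → ℝ) → (Fin d₂ → ℝ))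
    (hQ₁ : Measurable Q₁) (hQ₂ : Measurable Q₂)
    {l : ℕ} (U : Fin l → Set (Fin d₀ → ℝ)) (hUm : ∀ i, MeasurableSet (U i))
    (hUdisj : Pairwise (Function.onFun Disjoint U))
    (hUcover : (⋃ i, U i) = unitCube d₀)
    (B : Set ((Fin d₀ → ℝ) × (Fin d₁ → ℝ))) (hB : MeasurableSet B)
    (C : ℝ≥0∞)
    (hC : ∀ g : (Fin d₀ → ℝ) → ℂ, IntegrableOn g (unitCube d₀) →
      eLpNorm (fun x : (Fin d₀ → ℝ) × (Fin d₁ → ℝ) =>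
          ∫ u in unitCube d₀,
            g u * e₂ ((∑ i, x.1 i * u i) + ∑ j, x.2 j * Q₁ u j))
        (ENNReal.ofReal p) (volume.restrict B)
      ≤ C * (∑ i, (eLpNorm (fun x : (Fin d₀ → ℝ) × (Fin d₁ → ℝ) =>
          ∫ u in U i,
            g u * e₂ ((∑ i', x.1 i' * u i') + ∑ j, x.2 j * Q₁ u j))
        (ENNReal.ofReal p) (volume.restrict B)) ^ q) ^ (1 / q)) :
    ∀ B' : Set (Fin d₂ → ℝ), MeasurableSet B' →
      ∀ h : (Fin d₀ → ℝ) → ℂ, IntegrableOn h (unitCube d₀) →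
      eLpNorm (fun x : ((Fin d₀ → ℝ) × (Fin d₁ → ℝ)) × (Fin d₂ → ℝ) =>
          ∫ u in unitCube d₀,
            h u * e₂ ((∑ i, x.1.1 i * u i) + (∑ j, x.1.2 j * Q₁ u j)
              + ∑ k, x.2 k * Q₂ u k))
        (ENNReal.ofReal p) (volume.restrict (B ×ˢ B'))
      ≤ C * (∑ i, (eLpNorm (fun x : ((Fin d₀ → ℝ) × (Fin d₁ → ℝ)) × (Fin d₂ → ℝ) =>
          ∫ u in U i,
            h u * e₂ ((∑ i', x.1.1 i' * u i') + (∑ j, x.1.2 j * Q₁ u j)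
              + ∑ k, x.2 k * Q₂ u k))
        (ENNReal.ofReal p) (volume.restrict (B ×ˢ B'))) ^ q) ^ (1 / q) := by
  intro B' hB' h hh
  have hq0 : (0:ℝ) < q := lt_of_lt_of_le zero_lt_one hq
  have hp1 : (1:ℝ) ≤ p := le_trans hq hpq
  have hp0 : (0:ℝ) < p := lt_of_lt_of_le zero_lt_one hp1
  set P : ℝ≥0∞ := ENNReal.ofReal p with hP
  have hP0 : P ≠ 0 := by simp [hP, ENNReal.ofReal_eq_zero]; linarith
  have hPtop : P ≠ ∞ := ENNReal.ofReal_ne_top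
  set μ := volume.restrict B with hμ
  set ν := volume.restrict B' with hν
  have hprod : volume.restrict (B ×ˢ B') = μ.prod ν := by
    rw [hμ, hν, Measure.volume_eq_prod, Measure.prod_restrict]
  -- measurable representative of h
  obtain ⟨h', hsm, hae⟩ : ∃ h' : (Fin d₀ → ℝ) → ℂ, StronglyMeasurable h' ∧
      h =ᵐ[volume.restrict (unitCube d₀)] h' :=
    ⟨hh.1.mk h, hh.1.stronglyMeasurable_mk, hh.1.ae_eq_mk⟩
  have hh' : IntegrableOn h' (unitCube d₀) := hh.congr hae
  have hUsub : ∀ i, U i ⊆ unitCube d₀ := fun i => hUcover ▸ Set.subset_iUnion U i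
  -- integrability of modulated functions
  have hGint : ∀ x₂ : Fin d₂ → ℝ,
      IntegrableOn (fun u => h' u * e₂ (∑ k, x₂ k * Q₂ u k)) (unitCube d₀) := by
    intro x₂
    have hm : AEStronglyMeasurable (fun u => e₂ (∑ k, x₂ k * Q₂ u k))
        (volume.restrict (unitCube d₀)) := by
      refine (e₂_continuous.measurable.comp ?_).aestronglyMeasurable
      exact Finset.measurable_sum _ fun k _ =>
        (measurable_const.mul ((measurable_pi_apply k).comp hQ₂))
    have := hh'.bdd_mul (c := 1) hm (Filter.Eventually.of_forall fun u => le_of_eq (e₂_norm _))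
    exact this.congr (Filter.Eventually.of_forall fun u => mul_comm _ _)
  -- replace h by h' in the goal
  have hgen : ∀ S : Set (Fin d₀ → ℝ), S ⊆ unitCube d₀ →
      (fun x : ((Fin d₀ → ℝ) × (Fin d₁ → ℝ)) × (Fin d₂ → ℝ) =>
        ∫ u in S, h u * e₂ ((∑ i', x.1.1 i' * u i') + (∑ j, x.1.2 j * Q₁ u j)
          + ∑ k, x.2 k * Q₂ u k))
      = (fun x : ((Fin d₀ → ℝ) × (Fin d₁ → ℝ)) × (Fin d₂ → ℝ) =>
        ∫ u in S, (h' u * e₂ (∑ k, x.2 k * Q₂ u k))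
          * e₂ ((∑ i', x.1.1 i' * u i') + ∑ j, x.1.2 j * Q₁ u j)) := by
    intro S hS
    funext x
    have haeS : h =ᵐ[volume.restrict S] h' := ae_restrict_of_ae_restrict_of_subset hS hae
    refine integral_congr_ae (haeS.mono fun u hu => ?_)
    simp only [e₂_add, hu]
    ring
  have hfunU : ∀ i : Fin l,
      (fun x : ((Fin d₀ → ℝ) × (Fin d₁ → ℝ)) × (Fin d₂ → ℝ) =>
        ∫ u in U i, h u * e₂ ((∑ i', x.1.1 i' * u i') + (∑ j, x.1.2 j * Q₁ u j)
          + ∑ k, x.2 k * Q₂ u k))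
      = (fun x : ((Fin d₀ → ℝ) × (Fin d₁ → ℝ)) × (Fin d₂ → ℝ) =>
        ∫ u in U i, (h' u * e₂ (∑ k, x.2 k * Q₂ u k))
          * e₂ ((∑ i', x.1.1 i' * u i') + ∑ j, x.1.2 j * Q₁ u j)) :=
    fun i => hgen (U i) (hUsub i)
  rw [hprod, hgen (unitCube d₀) subset_rfl]
  simp only [hfunU]
  -- joint strong measurability
  have hSM : ∀ S : Set (Fin d₀ → ℝ),
      StronglyMeasurable (fun x : ((Fin d₀ → ℝ) × (Fin d₁ → ℝ)) × (Fin d₂ → ℝ) =>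
        ∫ u in S, (h' u * e₂ (∑ k, x.2 k * Q₂ u k))
          * e₂ ((∑ i', x.1.1 i' * u i') + ∑ j, x.1.2 j * Q₁ u j)) := by
    intro S
    apply StronglyMeasurable.integral_prod_right'
      (f := fun z : (((Fin d₀ → ℝ) × (Fin d₁ → ℝ)) × (Fin d₂ → ℝ)) × (Fin d₀ → ℝ) =>
        (h' z.2 * e₂ (∑ k, z.1.2 k * Q₂ z.2 k))
          * e₂ ((∑ i', z.1.1.1 i' * z.2 i') + ∑ j, z.1.1.2 j * Q₁ z.2 j))
    refine Measurable.stronglyMeasurable ?_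
    have m1 : Measurable fun z : (((Fin d₀ → ℝ) × (Fin d₁ → ℝ)) × (Fin d₂ → ℝ)) × (Fin d₀ → ℝ) =>
        h' z.2 := hsm.measurable.comp measurable_snd
    have m2 : Measurable fun z : (((Fin d₀ → ℝ) × (Fin d₁ → ℝ)) × (Fin d₂ → ℝ)) × (Fin d₀ → ℝ) =>
        (∑ k, z.1.2 k * Q₂ z.2 k) :=
      Finset.measurable_sum _ fun k _ =>
        (((measurable_pi_apply k).comp (measurable_snd.comp measurable_fst)).mul
          ((measurable_pi_apply k).comp (hQ₂.comp measurable_snd)))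
    have m3 : Measurable fun z : (((Fin d₀ → ℝ) × (Fin d₁ → ℝ)) × (Fin d₂ → ℝ)) × (Fin d₀ → ℝ) =>
        ((∑ i', z.1.1.1 i' * z.2 i') + ∑ j, z.1.1.2 j * Q₁ z.2 j) := by
      refine Measurable.add ?_ ?_
      · exact Finset.measurable_sum _ fun i' _ =>
          (((measurable_pi_apply i').comp
            ((measurable_fst.comp measurable_fst).comp measurable_fst)).mul
            ((measurable_pi_apply i').comp measurable_snd))
      · exact Finset.measurable_sum _ fun j _ =>
          (((measurable_pi_apply j).comp
            ((measurable_snd.comp measurable_fst).comp measurable_fst)).mul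
            ((measurable_pi_apply j).comp (hQ₁.comp measurable_snd)))
    exact (m1.mul (e₂_continuous.measurable.comp m2)).mul (e₂_continuous.measurable.comp m3)
  -- Fubini for eLpNorm
  have hfub : ∀ S : Set (Fin d₀ → ℝ),
      eLpNorm (fun x : ((Fin d₀ → ℝ) × (Fin d₁ → ℝ)) × (Fin d₂ → ℝ) =>
        ∫ u in S, (h' u * e₂ (∑ k, x.2 k * Q₂ u k))
          * e₂ ((∑ i', x.1.1 i' * u i') + ∑ j, x.1.2 j * Q₁ u j)) P (μ.prod ν)
      = (∫⁻ y, (eLpNorm (fun x₁ : (Fin d₀ → ℝ) × (Fin d₁ → ℝ) =>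
          ∫ u in S, (h' u * e₂ (∑ k, y k * Q₂ u k))
            * e₂ ((∑ i', x₁.1 i' * u i') + ∑ j, x₁.2 j * Q₁ u j)) P μ) ^ p ∂ν) ^ (1 / p) :=
    fun S => fubini_eLpNorm hp0 (hSM S)
  rw [hfub (unitCube d₀)]
  have hfubU : ∀ i : Fin l,
      eLpNorm (fun x : ((Fin d₀ → ℝ) × (Fin d₁ → ℝ)) × (Fin d₂ → ℝ) =>
        ∫ u in U i, (h' u * e₂ (∑ k, x.2 k * Q₂ u k))
          * e₂ ((∑ i', x.1.1 i' * u i') + ∑ j, x.1.2 j * Q₁ u j)) P (μ.prod ν)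
      = (∫⁻ y, (eLpNorm (fun x₁ : (Fin d₀ → ℝ) × (Fin d₁ → ℝ) =>
          ∫ u in U i, (h' u * e₂ (∑ k, y k * Q₂ u k))
            * e₂ ((∑ i', x₁.1 i' * u i') + ∑ j, x₁.2 j * Q₁ u j)) P μ) ^ p ∂ν) ^ (1 / p) :=
    fun i => hfub (U i)
  simp only [hfubU]
  -- slice measurability
  have hslice : ∀ S : Set (Fin d₀ → ℝ), AEMeasurable (fun y : Fin d₂ → ℝ =>
      eLpNorm (fun x₁ : (Fin d₀ → ℝ) × (Fin d₁ → ℝ) =>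
        ∫ u in S, (h' u * e₂ (∑ k, y k * Q₂ u k))
          * e₂ ((∑ i', x₁.1 i' * u i') + ∑ j, x₁.2 j * Q₁ u j)) P μ) ν := by
    intro S
    have heq : (fun y : Fin d₂ → ℝ =>
        eLpNorm (fun x₁ : (Fin d₀ → ℝ) × (Fin d₁ → ℝ) =>
          ∫ u in S, (h' u * e₂ (∑ k, y k * Q₂ u k))
            * e₂ ((∑ i', x₁.1 i' * u i') + ∑ j, x₁.2 j * Q₁ u j)) P μ)
        = fun y => (∫⁻ x₁, (‖(fun x : ((Fin d₀ → ℝ) × (Fin d₁ → ℝ)) × (Fin d₂ → ℝ) =>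
            ∫ u in S, (h' u * e₂ (∑ k, x.2 k * Q₂ u k))
              * e₂ ((∑ i', x.1.1 i' * u i') + ∑ j, x.1.2 j * Q₁ u j)) (x₁, y)‖₊ : ℝ≥0∞) ^ p
            ∂μ) ^ (1 / p) := by
      funext y
      rw [eLpNorm_eq_lintegral_rpow_enorm_toReal hP0 hPtop, ENNReal.toReal_ofReal hp0.le]; rfl
    rw [heq]
    exact ((((hSM S).measurable.enorm.pow_const p).lintegral_prod_left').pow_const
      _).aemeasurable
  -- pointwise application of hC
  have K5 : ∀ y : Fin d₂ → ℝ,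
      eLpNorm (fun x₁ : (Fin d₀ → ℝ) × (Fin d₁ → ℝ) =>
        ∫ u in unitCube d₀, (h' u * e₂ (∑ k, y k * Q₂ u k))
          * e₂ ((∑ i', x₁.1 i' * u i') + ∑ j, x₁.2 j * Q₁ u j)) P μ
      ≤ C * (∑ i, (eLpNorm (fun x₁ : (Fin d₀ → ℝ) × (Fin d₁ → ℝ) =>
        ∫ u in U i, (h' u * e₂ (∑ k, y k * Q₂ u k))
          * e₂ ((∑ i', x₁.1 i' * u i') + ∑ j, x₁.2 j * Q₁ u j)) P μ) ^ q) ^ (1 / q) :=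
    fun y => hC (fun u => h' u * e₂ (∑ k, y k * Q₂ u k)) (hGint y)
  exact key12 hq hpq C _ _ (fun i => hslice (U i)) K5
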